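/- (Existence of a non-expansive pullback point; Corollary 3.3.) Let n ≥ 1, d, m ≥ 1, let p₁,…,pₙ ∈ ℝ^d and q₁,…,qₙ ∈ ℝ^m satisfy ‖pᵢ − pⱼ‖ ≤ ‖qᵢ − qⱼ‖ for all i, j ∈ {1,…,n}. Then for every x ∈ ℝ^m there exists a point y ∈ ℝ^d such that ‖y − pᵢ‖ ≤ ‖x − qᵢ‖ for every i ∈ {1,…,n}. -/

import Mathlib

open Finset RealInnerProductSpace

lemma key_identity {E : Type*} [NormedAddCommGroup E] [InnerProductSpace ℝ E] {ι : Type*}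
    (t : Finset ι) (c : ι → ℝ) (v : ι → E) (hc : ∑ i ∈ t, c i = 1) :
    ∑ i ∈ t, ∑ j ∈ t, c i * c j * ‖v i - v j‖^2
      = 2*(∑ i ∈ t, c i * ‖v i‖^2) - 2*‖∑ i ∈ t, c i • v i‖^2 := by
  have hn : ‖∑ i ∈ t, c i • v i‖^2 = ∑ i ∈ t, ∑ j ∈ t, c i * c j * ⟪v i, v j⟫ := by
    rw [← real_inner_self_eq_norm_sq, sum_inner]
    refine Finset.sum_congr rfl fun i _ => ?_
    rw [real_inner_smul_left, inner_sum, Finset.mul_sum]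
    refine Finset.sum_congr rfl fun j _ => ?_
    rw [real_inner_smul_right]; ring
  have expand : ∀ i j : ι, ‖v i - v j‖^2
      = ‖v i‖^2 - 2*⟪v i, v j⟫ + ‖v j‖^2 := fun i j => by
    rw [@norm_sub_sq_real]
  rw [hn]
  have step : ∀ i ∈ t, ∑ j ∈ t, c i * c j * ‖v i - v j‖^2
      = c i * ‖v i‖^2 + c i * (∑ j ∈ t, c j * ‖v j‖^2)
        - 2 * ∑ j ∈ t, c i * c j * ⟪v i, v j⟫ := by
    intro i _
    have : ∀ j ∈ t, c i * c j * ‖v i - v j‖^2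
        = c i * ‖v i‖^2 * c j + c i * (c j * ‖v j‖^2) - 2 * (c i * c j * ⟪v i, v j⟫) := by
      intro j _; rw [expand i j]; ring
    rw [Finset.sum_congr rfl this, Finset.sum_sub_distrib, Finset.sum_add_distrib,
      ← Finset.mul_sum, ← Finset.mul_sum, ← Finset.mul_sum, hc]
    ring
  rw [Finset.sum_congr rfl step, Finset.sum_sub_distrib, Finset.sum_add_distrib,
    ← Finset.sum_mul, hc, ← Finset.mul_sum]
  ring

set_option maxHeartbeats 1000000 in
theorem stmt_6 (n d m : ℕ) (hn : 1 ≤ n) (hd : 1 ≤ d) (hm : 1 ≤ m)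
    (p : Fin n → EuclideanSpace ℝ (Fin d)) (q : Fin n → EuclideanSpace ℝ (Fin m))
    (hpq : ∀ i j, ‖p i - p j‖ ≤ ‖q i - q j‖) :
    ∀ x : EuclideanSpace ℝ (Fin m), ∃ y : EuclideanSpace ℝ (Fin d),
      ∀ i, ‖y - p i‖ ≤ ‖x - q i‖ := by
  intro x
  have hne : (Finset.univ : Finset (Fin n)).Nonempty := ⟨⟨0, hn⟩, Finset.mem_univ _⟩
  set f : EuclideanSpace ℝ (Fin d) → ℝ :=
    fun y => Finset.univ.sup' hne (fun i => ‖y - p i‖^2 - ‖x - q i‖^2) with hf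
  have hcont : Continuous f := by
    rw [hf]
    exact Continuous.finset_sup'_apply hne
      (f := fun i y => ‖y - p i‖^2 - ‖x - q i‖^2) (fun i _ => by fun_prop)
  -- existence of a global minimizer
  obtain ⟨y₀, hmin⟩ : ∃ y₀, ∀ y, f y₀ ≤ f y := by
    set i0 : Fin n := ⟨0, hn⟩ with hi0
    have haux : ‖p i0 - p i0‖^2 - ‖x - q i0‖^2 ≤ f (p i0) :=
      Finset.le_sup' (f := fun i => ‖p i0 - p i‖^2 - ‖x - q i‖^2) (Finset.mem_univ i0)
    have ha : 0 ≤ f (p i0) + ‖x - q i0‖^2 := by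
      simp only [sub_self, norm_zero] at haux
      nlinarith
    set a := f (p i0) + ‖x - q i0‖^2 with haa
    set R := Real.sqrt a + 1 with hR
    have hR0 : 0 ≤ R := by positivity
    have hball : p i0 ∈ Metric.closedBall (p i0) R := by
      simp only [Metric.mem_closedBall, dist_self]
      positivity
    obtain ⟨y₀, hy₀, hminOn⟩ := (isCompact_closedBall (p i0) R).exists_isMinOn
      ⟨p i0, hball⟩ hcont.continuousOn
    refine ⟨y₀, fun y => ?_⟩
    by_cases hy : y ∈ Metric.closedBall (p i0) R
    · exact hminOn hy
    · have h1 : R < ‖y - p i0‖ := by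
        simpa [Metric.mem_closedBall, dist_eq_norm] using hy
      have h2 : ‖y - p i0‖^2 - ‖x - q i0‖^2 ≤ f y :=
        Finset.le_sup' (f := fun i => ‖y - p i‖^2 - ‖x - q i‖^2) (Finset.mem_univ i0)
      have h3 : f y₀ ≤ f (p i0) := hminOn hball
      have h4 := Real.sq_sqrt ha
      have h5 : R^2 < ‖y - p i0‖^2 := by nlinarith
      have h6 : Real.sqrt a ≥ 0 := Real.sqrt_nonneg _
      nlinarith
  -- it suffices that the min value is ≤ 0
  rcases le_or_gt (f y₀) 0 with hM | hM
  · refine ⟨y₀, fun i => ?_⟩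
    have h1 : ‖y₀ - p i‖^2 - ‖x - q i‖^2 ≤ f y₀ :=
      Finset.le_sup' (f := fun i => ‖y₀ - p i‖^2 - ‖x - q i‖^2) (Finset.mem_univ i)
    nlinarith [norm_nonneg (y₀ - p i), norm_nonneg (x - q i)]
  · exfalso
    set M := f y₀ with hMdef
    set A : Finset (Fin n) :=
      Finset.univ.filter (fun i => ‖y₀ - p i‖^2 - ‖x - q i‖^2 = M) with hA
    have hAne : A.Nonempty := by
      obtain ⟨i, _, hi⟩ := Finset.exists_mem_eq_sup' hne
        (fun i => ‖y₀ - p i‖^2 - ‖x - q i‖^2)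
      exact ⟨i, Finset.mem_filter.2 ⟨Finset.mem_univ _, hi.symm⟩⟩
    -- 0 is in the convex hull of the active gradients
    have h0 : (0 : EuclideanSpace ℝ (Fin d)) ∈
        convexHull ℝ ((fun i => y₀ - p i) '' (A : Set (Fin n))) := by
      by_contra h0
      have hKc : IsClosed (convexHull ℝ ((fun i => y₀ - p i) '' (A : Set (Fin n)))) :=
        (((A : Set (Fin n)).toFinite.image _).isCompact_convexHull (𝕜 := ℝ)).isClosed
      obtain ⟨φ, u, hfu, hub⟩ :=
        geometric_hahn_banach_point_closed (convex_convexHull ℝ _) hKc h0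
      set v := (InnerProductSpace.toDual ℝ (EuclideanSpace ℝ (Fin d))).symm φ with hv
      have hvz : ∀ z' : EuclideanSpace ℝ (Fin d), ⟪v, z'⟫ = φ z' := fun z' =>
        InnerProductSpace.toDual_symm_apply
      have hu0 : 0 < u := by have := hfu; rwa [map_zero] at this
      have hAi : ∀ i ∈ A, u < ⟪v, y₀ - p i⟫ := by
        intro i hi
        rw [hvz]
        exact hub _ (subset_convexHull ℝ _ ⟨i, Finset.mem_coe.2 hi, rfl⟩)
      obtain ⟨i₁, hi₁⟩ := hAne
      have hv0 : 0 < ‖v‖ := by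
        rcases eq_or_ne v 0 with h | h
        · exfalso
          have := hAi i₁ hi₁
          rw [h, inner_zero_left] at this
          linarith
        · exact norm_pos_iff.2 h
      set nv := ‖v‖ with hnv
      set B := Finset.univ.sup' hne (fun i => ‖y₀ - p i‖) with hB
      have hBle : ∀ i, ‖y₀ - p i‖ ≤ B := fun i =>
        Finset.le_sup' (f := fun i => ‖y₀ - p i‖) (Finset.mem_univ i)
      have hB0 : 0 ≤ B := le_trans (norm_nonneg _) (hBle i₁)
      set D := 2*B*nv + nv^2 + 1 with hD
      have hD0 : 0 < D := by positivity
      set s' := Finset.univ.filter (fun i => i ∉ A) with hs'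
      have hδpos : ∀ i ∈ s', 0 < M + ‖x - q i‖^2 - ‖y₀ - p i‖^2 := by
        intro i hi
        have h1 : ‖y₀ - p i‖^2 - ‖x - q i‖^2 ≤ M :=
          Finset.le_sup' (f := fun i => ‖y₀ - p i‖^2 - ‖x - q i‖^2) (Finset.mem_univ i)
        have h2 : ‖y₀ - p i‖^2 - ‖x - q i‖^2 ≠ M := by
          intro hc
          exact (Finset.mem_filter.1 hi).2 (Finset.mem_filter.2 ⟨Finset.mem_univ _, hc⟩)
        have := lt_of_le_of_ne h1 h2
        linarith
      set δm := if hs : s'.Nonempty then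
          s'.inf' hs (fun i => M + ‖x - q i‖^2 - ‖y₀ - p i‖^2) else 1 with hδm
      have hδm0 : 0 < δm := by
        rw [hδm]
        split_ifs with hs
        · exact (Finset.lt_inf'_iff hs).2 (fun i hi => hδpos i hi)
        · exact one_pos
      set t := min 1 (min (u / nv^2) (δm / D)) with ht
      have ht0 : 0 < t :=
        lt_min one_pos (lt_min (div_pos hu0 (by positivity)) (div_pos hδm0 hD0))
      have ht1 : t ≤ 1 := min_le_left _ _
      have htu : t * nv^2 ≤ u := by
        have h := le_trans (min_le_right (1:ℝ) _) (min_le_left (u / nv^2) (δm / D))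
        exact (le_div_iff₀ (by positivity)).1 h
      have htD : t * D ≤ δm := by
        have h := le_trans (min_le_right (1:ℝ) _) (min_le_right (u / nv^2) (δm / D))
        exact (le_div_iff₀ hD0).1 h
      have hkey : f (y₀ - t • v) < M := by
        refine (Finset.sup'_lt_iff hne).2 fun i _ => ?_
        have hyp : y₀ - t • v - p i = (y₀ - p i) - t • v := by abel
        by_cases hiA : i ∈ A
        · have h1 : ‖y₀ - t • v - p i‖^2
              = ‖y₀ - p i‖^2 - 2*(t*⟪v, y₀ - p i⟫) + t^2*nv^2 := by
            rw [hyp, @norm_sub_sq_real, real_inner_smul_right, real_inner_comm,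
              norm_smul, Real.norm_eq_abs, abs_of_pos ht0]
            ring
          have h2 : ‖y₀ - p i‖^2 - ‖x - q i‖^2 = M := (Finset.mem_filter.1 hiA).2
          have h3 := hAi i hiA
          have h4 : 0 < t * ⟪v, y₀ - p i⟫ := mul_pos ht0 (hu0.trans h3)
          nlinarith [mul_le_mul_of_nonneg_left htu ht0.le,
            mul_lt_mul_of_pos_left h3 ht0]
        · have hle : ‖y₀ - t • v - p i‖ ≤ ‖y₀ - p i‖ + t * nv := by
            rw [hyp]
            refine (norm_sub_le _ _).trans ?_
            rw [norm_smul, Real.norm_eq_abs, abs_of_pos ht0]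
          have his' : i ∈ s' := Finset.mem_filter.2 ⟨Finset.mem_univ _, hiA⟩
          have hδi : δm ≤ M + ‖x - q i‖^2 - ‖y₀ - p i‖^2 := by
            rw [hδm, dif_pos ⟨i, his'⟩]
            exact Finset.inf'_le _ his'
          have h5 := hBle i
          have h6 : (0:ℝ) ≤ ‖y₀ - t • v - p i‖ := norm_nonneg _
          have h7 : (0:ℝ) ≤ ‖y₀ - p i‖ := norm_nonneg _
          have e1 : ‖y₀ - t • v - p i‖^2 ≤ (‖y₀ - p i‖ + t * nv)^2 := by
            have := mul_self_le_mul_self h6 hle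
            nlinarith [this]
          have e2 : (‖y₀ - p i‖ + t * nv)^2
              = ‖y₀ - p i‖^2 + (2*t*nv)*‖y₀ - p i‖ + t^2*nv^2 := by ring
          have e3 : (2*t*nv)*‖y₀ - p i‖ ≤ (2*t*nv)*B :=
            mul_le_mul_of_nonneg_left h5
              (by positivity)
          have e4 : t^2*nv^2 ≤ t*nv^2 := by nlinarith [mul_nonneg ht0.le (sq_nonneg nv)]
          have e5 : (2*t*nv)*B + t*nv^2 = t*D - t := by rw [hD]; ring
          linarith [htD, hδi, ht0, e1]
      exact absurd (hmin (y₀ - t • v)) (not_le.2 hkey)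
    -- extract weights and derive M ≤ 0
    rw [_root_.convexHull_eq] at h0
    obtain ⟨ι, s, w, z, hw0, hw1, hz, hcm⟩ := h0
    have hjm : ∀ i : ι, ∃ j : Fin n, i ∈ s → (j ∈ A ∧ y₀ - p j = z i) := by
      intro i
      by_cases hi : i ∈ s
      · obtain ⟨j, hj, hjz⟩ := hz i hi
        exact ⟨j, fun _ => ⟨by simpa using hj, hjz⟩⟩
      · exact ⟨⟨0, hn⟩, fun h => absurd h hi⟩
    choose jm hjmspec using hjm
    have hsum0 : ∑ i ∈ s, w i • (y₀ - p (jm i)) = 0 := by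
      have : ∑ i ∈ s, w i • (y₀ - p (jm i)) = ∑ i ∈ s, w i • z i :=
        Finset.sum_congr rfl fun i hi => by rw [(hjmspec i hi).2]
      rw [this]
      have := hcm
      rwa [Finset.centerMass, hw1, inv_one, one_smul] at this
    have hact : ∀ i ∈ s, ‖y₀ - p (jm i)‖^2 = M + ‖x - q (jm i)‖^2 := by
      intro i hi
      have := (Finset.mem_filter.1 (hjmspec i hi).1).2
      linarith
    have e1 := key_identity s w (fun i => y₀ - p (jm i)) hw1
    have e2 := key_identity s w (fun i => x - q (jm i)) hw1
    rw [hsum0, norm_zero] at e1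
    have hsum1 : ∑ i ∈ s, w i * ‖y₀ - p (jm i)‖^2
        = M + ∑ i ∈ s, w i * ‖x - q (jm i)‖^2 := by
      have : ∀ i ∈ s, w i * ‖y₀ - p (jm i)‖^2
          = w i * M + w i * ‖x - q (jm i)‖^2 := by
        intro i hi; rw [hact i hi]; ring
      rw [Finset.sum_congr rfl this, Finset.sum_add_distrib, ← Finset.sum_mul, hw1]
      ring
    have hterm : ∑ i ∈ s, ∑ j ∈ s, w i * w j * ‖(y₀ - p (jm i)) - (y₀ - p (jm j))‖^2
        ≤ ∑ i ∈ s, ∑ j ∈ s, w i * w j * ‖(x - q (jm i)) - (x - q (jm j))‖^2 := by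
      refine Finset.sum_le_sum fun i hi => Finset.sum_le_sum fun j hj => ?_
      have h1 : (y₀ - p (jm i)) - (y₀ - p (jm j)) = p (jm j) - p (jm i) := by abel
      have h2 : (x - q (jm i)) - (x - q (jm j)) = q (jm j) - q (jm i) := by abel
      rw [h1, h2]
      exact mul_le_mul_of_nonneg_left
        (pow_le_pow_left₀ (norm_nonneg _) (hpq (jm j) (jm i)) 2)
        (mul_nonneg (hw0 i hi) (hw0 j hj))
    rw [e1, e2] at hterm
    rw [hsum1] at hterm
    nlinarith [sq_nonneg ‖∑ i ∈ s, w i • (x - q (jm i))‖]
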